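/- For every positive integer n and every symmetric convex body K ⊂ ℝⁿ, there is a rotation U ∈ SO(n) such that for every norm N on ℝⁿ and every k ∈ {2, …, n}, the diameter of Q_{k-1}(U K) with respect to N is at most 3 times the diameter of Q_k(U K) with respect to N. -/

import Mathlib

open Set Pointwise

/-- The orthogonal projection of `ℝⁿ` onto the coordinate subspace `span {e_j : j ∈ S}`. -/
noncomputable def coordProj {n : ℕ} (S : Finset (Fin n)) (x : EuclideanSpace ℝ (Fin n)) :
    EuclideanSpace ℝ (Fin n) :=
  WithLp.toLp 2 (fun j => if j ∈ S then x j else 0)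

/-- The `k`-convex hull of a set `K ⊆ ℝⁿ`. -/
noncomputable def kConvexHull (n k : ℕ) (K : Set (EuclideanSpace ℝ (Fin n))) :
    Set (EuclideanSpace ℝ (Fin n)) :=
  ⋂ S ∈ {S : Finset (Fin n) | S.card = k}, coordProj S ⁻¹' (coordProj S '' K)

/-- The diameter of a set `A` with respect to a norm `N`. -/
noncomputable def ndiam {n : ℕ} (N : EuclideanSpace ℝ (Fin n) → ℝ)
    (A : Set (EuclideanSpace ℝ (Fin n))) : ℝ :=
  sSup {d : ℝ | ∃ x ∈ A, ∃ y ∈ A, d = N (x - y)}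

open RealInnerProductSpace

variable {n : ℕ}

lemma inner_sum' (x y : EuclideanSpace ℝ (Fin n)) : ⟪x, y⟫ = ∑ i, x i * y i := by
  simp [PiLp.inner_apply, RCLike.inner_apply, mul_comm]

lemma coordProj_apply (S : Finset (Fin n)) (x : EuclideanSpace ℝ (Fin n)) (j : Fin n) :
    coordProj S x j = if j ∈ S then x j else 0 := rfl

lemma inner_coordProj (S : Finset (Fin n)) (w x : EuclideanSpace ℝ (Fin n))
    (hw : ∀ i ∉ S, w i = 0) : ⟪w, coordProj S x⟫ = ⟪w, x⟫ := by
  rw [inner_sum', inner_sum']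
  refine Finset.sum_congr rfl fun i _ => ?_
  by_cases h : i ∈ S
  · rw [coordProj_apply, if_pos h]
  · rw [hw i h]; ring

lemma abs_coord_le_norm (x : EuclideanSpace ℝ (Fin n)) (i : Fin n) : |x i| ≤ ‖x‖ := by
  have h1 : ⟪(EuclideanSpace.single i (1:ℝ)), x⟫ = x i := by
    rw [EuclideanSpace.inner_single_left]; simp
  have := abs_real_inner_le_norm (EuclideanSpace.single i (1:ℝ)) x
  rwa [h1, EuclideanSpace.norm_single, norm_one, one_mul] at this

/-- the polar set -/
def polarSet (M : Set (EuclideanSpace ℝ (Fin n))) : Set (EuclideanSpace ℝ (Fin n)) :=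
  {u | ∀ y ∈ M, ⟪u, y⟫ ≤ 1}

/-- The good position property. -/
def GoodPos (M : Set (EuclideanSpace ℝ (Fin n))) : Prop :=
  ∃ r : Fin n → ℝ,
    (∀ i, 0 < r i ∧ r i • EuclideanSpace.single i 1 ∈ polarSet M) ∧
    ∀ z ∈ polarSet M, ∀ i : Fin n, (∀ l, l < i → z l = 0) → ‖z‖ ≤ r i

lemma polarSet_neg {M : Set (EuclideanSpace ℝ (Fin n))} (hMsym : ∀ y ∈ M, -y ∈ M)
    {w : EuclideanSpace ℝ (Fin n)} (hw : w ∈ polarSet M) : -w ∈ polarSet M := by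
  intro y hy
  have h := hw (-y) (hMsym y hy)
  rw [inner_neg_right] at h
  rw [inner_neg_left]
  linarith

lemma pair_le_one {M : Set (EuclideanSpace ℝ (Fin n))} {m : ℕ} {x w : EuclideanSpace ℝ (Fin n)}
    (hx : x ∈ kConvexHull n m M) (hw : w ∈ polarSet M)
    (T : Finset (Fin n)) (hT : T.card = m) (hsupp : ∀ i ∉ T, w i = 0) : ⟪w, x⟫ ≤ 1 := by
  have hxT : coordProj T x ∈ coordProj T '' M := by
    have := Set.mem_iInter₂.1 hx T hT
    exact this
  obtain ⟨y, hyM, hyx⟩ := hxT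
  calc ⟪w, x⟫ = ⟪w, coordProj T x⟫ := (inner_coordProj T w x hsupp).symm
    _ = ⟪w, coordProj T y⟫ := by rw [hyx]
    _ = ⟪w, y⟫ := inner_coordProj T w y hsupp
    _ ≤ 1 := hw y hyM

lemma key_ineq {M : Set (EuclideanSpace ℝ (Fin n))} (hM : GoodPos M)
    (hMsym : ∀ y ∈ M, -y ∈ M) {m : ℕ} (hm1 : 1 ≤ m) (hmn : m + 1 ≤ n)
    {x : EuclideanSpace ℝ (Fin n)} (hx : x ∈ kConvexHull n m M)
    {u : EuclideanSpace ℝ (Fin n)} (hu : u ∈ polarSet M)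
    (S : Finset (Fin n)) (hS : S.card = m + 1) (husupp : ∀ i ∉ S, u i = 0) :
    ⟪u, x⟫ ≤ 3 := by
  classical
  by_cases hu0 : u = 0
  · rw [hu0, inner_zero_left]; norm_num
  obtain ⟨r, hr, hchain⟩ := hM
  -- the minimal index of the support of u
  have hSune : (Finset.univ.filter (fun i => u i ≠ 0)).Nonempty := by
    obtain ⟨i, hi⟩ : ∃ i, u i ≠ 0 := by
      by_contra h
      push_neg at h
      exact hu0 (PiLp.ext h)
    exact ⟨i, by simp [hi]⟩
  obtain ⟨j, hj⟩ : ∃ j, j = (Finset.univ.filter (fun i => u i ≠ 0)).min' hSune := ⟨_, rfl⟩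
  have hjne : u j ≠ 0 := by
    have := (Finset.univ.filter (fun i => u i ≠ 0)).min'_mem hSune
    rw [← hj] at this
    simpa using this
  have hjS : j ∈ S := by
    by_contra h
    exact hjne (husupp j h)
  have hlt : ∀ l, l < j → u l = 0 := by
    intro l hl
    by_contra h
    have : j ≤ l := hj ▸ (Finset.univ.filter (fun i => u i ≠ 0)).min'_le l (by simp [h])
    exact absurd hl (not_lt.2 this)
  have hnorm : ‖u‖ ≤ r j := hchain u hu j hlt
  obtain ⟨s, hs_def⟩ : ∃ s, s = u j := ⟨_, rfl⟩
  have hs : |s| ≤ r j := hs_def ▸ le_trans (abs_coord_le_norm u j) hnorm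
  have hrj : 0 < r j := (hr j).1
  obtain ⟨t, ht_def⟩ : ∃ t, t = |s| / r j := ⟨_, rfl⟩
  have ht0 : 0 ≤ t := ht_def ▸ div_nonneg (abs_nonneg _) hrj.le
  have ht1 : t ≤ 1 := ht_def ▸ (div_le_one hrj).2 hs
  obtain ⟨σ, hσ⟩ : ∃ σ : ℝ, σ = if 0 ≤ s then 1 else -1 := ⟨_, rfl⟩
  have hσabs : σ * |s| = s := by
    rw [hσ]; rcases le_or_gt 0 s with h | h
    · rw [if_pos h, one_mul, abs_of_nonneg h]
    · rw [if_neg (not_le.2 h), neg_one_mul, abs_of_neg h, neg_neg]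
  have hts : t * (σ * r j) = s := by
    rw [ht_def]
    have : |s| / r j * (σ * r j) = σ * |s| := by field_simp
    rw [this, hσabs]
  obtain ⟨w₁, hw₁⟩ : ∃ w₁ : EuclideanSpace ℝ (Fin n),
      w₁ = (σ * r j) • EuclideanSpace.single j 1 := ⟨_, rfl⟩
  have hw₁pol : w₁ ∈ polarSet M := by
    rw [hw₁, hσ]
    rcases le_or_gt 0 s with h | h
    · rw [if_pos h, one_mul]; exact (hr j).2
    · rw [if_neg (not_le.2 h), neg_one_mul, neg_smul]
      exact polarSet_neg hMsym (hr j).2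
  have hw₁neg : -w₁ ∈ polarSet M := polarSet_neg hMsym hw₁pol
  obtain ⟨v, hv⟩ : ∃ v : EuclideanSpace ℝ (Fin n),
      v = (1 + t)⁻¹ • (u - s • EuclideanSpace.single j 1) := ⟨_, rfl⟩
  have h1t : (0:ℝ) < 1 + t := by linarith
  have huv : u = (1 + t) • v + t • w₁ := by
    rw [hv, smul_smul, mul_inv_cancel₀ (ne_of_gt h1t), one_smul, hw₁, smul_smul, hts]
    abel
  -- v is in the polar set
  have hvpol : v ∈ polarSet M := by
    intro y hy
    have hexp : ⟪v, y⟫ = (1 + t)⁻¹ * (⟪u, y⟫ + t * ⟪-w₁, y⟫) := by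
      rw [hv, real_inner_smul_left]
      congr 1
      rw [inner_sub_left, inner_neg_left, hw₁, real_inner_smul_left, real_inner_smul_left,
        ← hts]
      ring
    rw [hexp]
    have h1 : ⟪u, y⟫ ≤ 1 := hu y hy
    have h2 : ⟪-w₁, y⟫ ≤ 1 := hw₁neg y hy
    have h3 : ⟪u, y⟫ + t * ⟪-w₁, y⟫ ≤ 1 + t := by nlinarith
    calc (1 + t)⁻¹ * (⟪u, y⟫ + t * ⟪-w₁, y⟫) ≤ (1 + t)⁻¹ * (1 + t) :=
          mul_le_mul_of_nonneg_left h3 (inv_nonneg.2 h1t.le)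
      _ = 1 := inv_mul_cancel₀ (ne_of_gt h1t)
  -- supports
  have hsingle_apply : ∀ (i l : Fin n) (c : ℝ),
      (EuclideanSpace.single i c : EuclideanSpace ℝ (Fin n)) l = if l = i then c else 0 :=
    fun i l c => EuclideanSpace.single_apply i c l
  have hvapp : ∀ i, v i = (1 + t)⁻¹ * (u i - s * (if i = j then 1 else 0)) := by
    intro i
    rw [hv]
    show (1 + t)⁻¹ * ((u - s • EuclideanSpace.single j 1 :
      EuclideanSpace ℝ (Fin n)) i) = _
    congr 1
    show u i - s * (EuclideanSpace.single j 1 : EuclideanSpace ℝ (Fin n)) i = _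
    rw [hsingle_apply]
  have hvsupp : ∀ i ∉ S.erase j, v i = 0 := by
    intro i hi
    rw [hvapp i]
    by_cases hij : i = j
    · rw [if_pos hij, mul_one, hij, ← hs_def, sub_self, mul_zero]
    · have hiS : i ∉ S := fun hiS => hi (Finset.mem_erase.2 ⟨hij, hiS⟩)
      rw [if_neg hij, mul_zero, sub_zero, husupp i hiS, mul_zero]
  have hw₁supp : ∀ (T : Finset (Fin n)), j ∈ T → ∀ i ∉ T, w₁ i = 0 := by
    intro T hjT i hiT
    rw [hw₁]
    show (σ * r j) * (EuclideanSpace.single j 1 : EuclideanSpace ℝ (Fin n)) i = 0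
    have hne : i ≠ j := fun h => hiT (h ▸ hjT)
    rw [hsingle_apply, if_neg hne, mul_zero]
  -- apply pair_le_one
  have hverase : (S.erase j).card = m := by
    rw [Finset.card_erase_of_mem hjS, hS]
    omega
  have hv1 : ⟪v, x⟫ ≤ 1 := pair_le_one hx hvpol (S.erase j) hverase hvsupp
  obtain ⟨T₂, hT₂sub, hT₂sub2, hT₂card⟩ :=
    Finset.exists_subsuperset_card_eq (Finset.subset_univ {j})
      (by simpa using hm1) (by simp; omega)
  have hw1x : ⟪w₁, x⟫ ≤ 1 :=
    pair_le_one hx hw₁pol T₂ hT₂card (hw₁supp T₂ (hT₂sub (Finset.mem_singleton_self j)))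
  calc ⟪u, x⟫ = (1 + t) * ⟪v, x⟫ + t * ⟪w₁, x⟫ := by
        rw [huv, inner_add_left, real_inner_smul_left, real_inner_smul_left]
    _ ≤ (1 + t) * 1 + t * 1 := by
        have hvx2 := mul_le_mul_of_nonneg_left hv1 h1t.le
        have hwx2 := mul_le_mul_of_nonneg_left hw1x ht0
        linarith
    _ = 1 + 2 * t := by ring
    _ ≤ 3 := by linarith

noncomputable def coordProjL (S : Finset (Fin n)) :
    EuclideanSpace ℝ (Fin n) →ₗ[ℝ] EuclideanSpace ℝ (Fin n) where
  toFun := coordProj S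
  map_add' := by
    intro x y; ext l
    show (if l ∈ S then (x + y) l else 0) = (if l ∈ S then x l else 0) + (if l ∈ S then y l else 0)
    by_cases h : l ∈ S <;> simp [h]
  map_smul' := by
    intro c x; ext l
    show (if l ∈ S then (c • x) l else 0) = c * (if l ∈ S then x l else 0)
    by_cases h : l ∈ S <;> simp [h]

lemma coordProjL_coe (S : Finset (Fin n)) : ⇑(coordProjL S) = coordProj S := rfl

lemma coordProj_smul (S : Finset (Fin n)) (c : ℝ) (x : EuclideanSpace ℝ (Fin n)) :
    coordProj S (c • x) = c • coordProj S x := by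
  ext j
  show (if j ∈ S then (c • x) j else 0) = c * (if j ∈ S then x j else 0)
  split <;> simp

lemma esum_apply {ι : Type*} (s : Finset ι) (g : ι → EuclideanSpace ℝ (Fin n)) (l : Fin n) :
    (∑ i ∈ s, g i) l = ∑ i ∈ s, g i l := by
  classical
  induction s using Finset.cons_induction with
  | empty => rfl
  | cons a s ha ih => rw [Finset.sum_cons, Finset.sum_cons, ← ih]; rfl

lemma euclidean_decomp (a : EuclideanSpace ℝ (Fin n)) :
    a = ∑ i, a i • (EuclideanSpace.single i 1 : EuclideanSpace ℝ (Fin n)) := by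
  ext l
  rw [esum_apply]
  rw [Finset.sum_eq_single l]
  · simp [EuclideanSpace.single_apply]
  · intro i _ hne
    simp [EuclideanSpace.single_apply, Ne.symm hne]
  · intro h
    exact absurd (Finset.mem_univ l) h

lemma mem_kConvexHull_iff {m : ℕ} {M : Set (EuclideanSpace ℝ (Fin n))}
    {x : EuclideanSpace ℝ (Fin n)} :
    x ∈ kConvexHull n m M ↔ ∀ S : Finset (Fin n), S.card = m →
      coordProj S x ∈ coordProj S '' M := by
  constructor
  · intro h S hS
    exact Set.mem_iInter₂.1 h S hS
  · intro h
    exact Set.mem_iInter₂.2 h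

lemma inclusion_third {M : Set (EuclideanSpace ℝ (Fin n))} (hGood : GoodPos M)
    (hMc : IsCompact M) (hMconv : Convex ℝ M) (hMsym : ∀ y ∈ M, -y ∈ M) (hM0 : (0:EuclideanSpace ℝ (Fin n)) ∈ M)
    {k : ℕ} (hk2 : 2 ≤ k) (hkn : k ≤ n)
    {x : EuclideanSpace ℝ (Fin n)} (hx : x ∈ kConvexHull n (k-1) M) :
    (3:ℝ)⁻¹ • x ∈ kConvexHull n k M := by
  classical
  rw [mem_kConvexHull_iff]
  intro S hS
  have hCconv : Convex ℝ (coordProj S '' M) := by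
    rw [← coordProjL_coe]
    exact hMconv.linear_image (coordProjL S)
  have hCcomp : IsCompact (coordProj S '' M) := by
    rw [← coordProjL_coe]
    exact hMc.image (coordProjL S).continuous_of_finiteDimensional
  have hCclosed : IsClosed (coordProj S '' M) := hCcomp.isClosed
  rw [coordProj_smul]
  by_contra hzC
  obtain ⟨f, c, hfC, hfz⟩ := geometric_hahn_banach_closed_point hCconv hCclosed hzC
  -- the vector representing f restricted to coordinates in S
  obtain ⟨w, hw⟩ : ∃ w : EuclideanSpace ℝ (Fin n),
      w = (WithLp.toLp 2 (fun i => if i ∈ S then f (EuclideanSpace.single i 1) else 0) :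
        EuclideanSpace ℝ (Fin n)) := ⟨_, rfl⟩
  have hwsupp : ∀ i ∉ S, w i = 0 := by
    intro i hi; rw [hw]; exact if_neg hi
  have hfw : ∀ a : EuclideanSpace ℝ (Fin n), (∀ i ∉ S, a i = 0) → ⟪w, a⟫ = f a := by
    intro a ha
    rw [inner_sum']
    conv_rhs => rw [euclidean_decomp a]
    rw [map_sum]
    refine Finset.sum_congr rfl fun i _ => ?_
    rw [map_smul, smul_eq_mul]
    by_cases h : i ∈ S
    · rw [hw]
      show (if i ∈ S then f (EuclideanSpace.single i 1) else 0) * a i = _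
      rw [if_pos h]; ring
    · rw [hwsupp i h, ha i h]; simp
  -- f is positive at c
  have h0C : (0 : EuclideanSpace ℝ (Fin n)) ∈ coordProj S '' M :=
    ⟨0, hM0, by ext l; simp [coordProj_apply]⟩
  have hc0 : 0 < c := by
    have := hfC 0 h0C
    rwa [map_zero] at this
  -- the normalized functional vector is in the polar set
  have hwpol : c⁻¹ • w ∈ polarSet M := by
    intro y hy
    have h1 : ⟪w, y⟫ = f (coordProj S y) := by
      rw [← inner_coordProj S w y hwsupp]
      exact hfw (coordProj S y) (fun i hi => by rw [coordProj_apply, if_neg hi])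
    have h2 : f (coordProj S y) < c := hfC _ ⟨y, hy, rfl⟩
    rw [real_inner_smul_left, h1]
    have := mul_le_mul_of_nonneg_left h2.le (inv_nonneg.2 hc0.le)
    rwa [inv_mul_cancel₀ hc0.ne'] at this
  have hwS : ∀ i ∉ S, (c⁻¹ • w : EuclideanSpace ℝ (Fin n)) i = 0 := by
    intro i hi
    show c⁻¹ * w i = 0
    rw [hwsupp i hi, mul_zero]
  have hcard' : S.card = (k - 1) + 1 := by rw [hS]; omega
  have hkey : ⟪c⁻¹ • w, x⟫ ≤ 3 :=
    key_ineq hGood hMsym (by omega) (by omega) hx hwpol S hcard' hwS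
  -- derive the contradiction
  have hzsupp : ∀ i ∉ S, ((3:ℝ)⁻¹ • coordProj S x : EuclideanSpace ℝ (Fin n)) i = 0 := by
    intro i hi
    show (3:ℝ)⁻¹ * coordProj S x i = 0
    rw [coordProj_apply, if_neg hi, mul_zero]
  have h3 : ⟪w, (3:ℝ)⁻¹ • coordProj S x⟫ = f ((3:ℝ)⁻¹ • coordProj S x) :=
    hfw _ hzsupp
  have h4 : ⟪w, (3:ℝ)⁻¹ • coordProj S x⟫ = 3⁻¹ * ⟪w, x⟫ := by
    rw [real_inner_smul_right, inner_coordProj S w x hwsupp]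
  have h5 : c < 3⁻¹ * ⟪w, x⟫ := by
    rw [← h4, h3]; exact hfz
  have h6 : ⟪c⁻¹ • w, x⟫ = c⁻¹ * ⟪w, x⟫ := real_inner_smul_left _ _ _
  rw [h6] at hkey
  have hc3 : (3:ℝ) * c < ⟪w, x⟫ := by linarith
  have : ⟪w, x⟫ ≤ 3 * c := by
    have := mul_le_mul_of_nonneg_left hkey hc0.le
    rw [← mul_assoc, mul_inv_cancel₀ hc0.ne', one_mul] at this
    linarith
  linarith

-- === chain ===


lemma exists_chain (L : Set (EuclideanSpace ℝ (Fin n))) (hLc : IsCompact L)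
    {δ : ℝ} (hδ : 0 < δ) (hball : Metric.closedBall 0 δ ⊆ L) :
    ∃ (u : Fin n → EuclideanSpace ℝ (Fin n)) (r : Fin n → ℝ), Orthonormal ℝ u ∧
      (∀ i, 0 < r i ∧ r i • u i ∈ L) ∧
      ∀ x ∈ L, ∀ i : Fin n, (∀ l, l < i → ⟪u l, x⟫ = 0) → ‖x‖ ≤ r i := by
  suffices h : ∀ m, m ≤ n → ∃ (u : Fin m → EuclideanSpace ℝ (Fin n)) (r : Fin m → ℝ),
      Orthonormal ℝ u ∧ (∀ i, 0 < r i ∧ r i • u i ∈ L) ∧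
      ∀ x ∈ L, ∀ i : Fin m, (∀ l, l < i → ⟪u l, x⟫ = 0) → ‖x‖ ≤ r i by
    exact h n le_rfl
  intro m
  induction m with
  | zero =>
      intro _
      exact ⟨Fin.elim0, Fin.elim0, by
        rw [orthonormal_iff_ite]; exact fun i => i.elim0, fun i => i.elim0,
        fun x hx i => i.elim0⟩
  | succ m ih =>
      intro hm
      obtain ⟨u, r, hON, hmem, hmax⟩ := ih (Nat.le_of_succ_le hm)
      set W : Set (EuclideanSpace ℝ (Fin n)) := {x | ∀ l : Fin m, ⟪u l, x⟫ = 0} with hW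
      have hWclosed : IsClosed W := by
        have : W = ⋂ l : Fin m, {x | ⟪u l, x⟫ = 0} := by
          ext x; simp [hW]
        rw [this]
        exact isClosed_iInter fun l =>
          isClosed_eq (Continuous.inner continuous_const continuous_id) continuous_const
      have hLW : IsCompact (L ∩ W) := hLc.inter_right hWclosed
      have h0 : (0 : EuclideanSpace ℝ (Fin n)) ∈ L ∩ W :=
        ⟨hball (by simp [hδ.le]), fun l => inner_zero_right _⟩
      obtain ⟨p, hpLW, hpmax'⟩ := hLW.exists_isMaxOn ⟨0, h0⟩ continuous_norm.continuousOn
      have hpmax : ∀ y ∈ L ∩ W, ‖y‖ ≤ ‖p‖ := fun y hy => hpmax' hy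
      -- a unit vector orthogonal to all u l
      have hKsp : (Submodule.span ℝ (Set.range u))ᗮ ≠ ⊥ := by
        intro hbot
        rw [Submodule.orthogonal_eq_bot_iff] at hbot
        have := finrank_le_of_span_eq_top hbot
        simp [finrank_euclideanSpace_fin, Fintype.card_fin] at this
        omega
      obtain ⟨w₀, hw₀mem, hw₀ne⟩ := Submodule.exists_mem_ne_zero_of_ne_bot hKsp
      have hw₀W : ∀ l : Fin m, ⟪u l, w₀⟫ = 0 := fun l =>
        (Submodule.mem_orthogonal _ _).1 hw₀mem _ (Submodule.subset_span ⟨l, rfl⟩)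
      have hwW : (δ / ‖w₀‖) • w₀ ∈ L ∩ W := by
        constructor
        · apply hball
          simp only [Metric.mem_closedBall, dist_zero_right, norm_smul]
          rw [Real.norm_eq_abs, abs_div, abs_of_pos hδ, abs_of_pos (norm_pos_iff.2 hw₀ne)]
          rw [div_mul_cancel₀ _ (norm_ne_zero_iff.2 hw₀ne)]
        · intro l
          rw [inner_smul_right, hw₀W l, mul_zero]
      have hpδ : δ ≤ ‖p‖ := by
        have := hpmax _ hwW
        calc δ = ‖(δ / ‖w₀‖) • w₀‖ := by
                rw [norm_smul, Real.norm_eq_abs, abs_div, abs_of_pos hδ,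
                  abs_of_pos (norm_pos_iff.2 hw₀ne), div_mul_cancel₀ _ (norm_ne_zero_iff.2 hw₀ne)]
          _ ≤ ‖p‖ := this
      have hppos : 0 < ‖p‖ := lt_of_lt_of_le hδ hpδ
      have hpne : p ≠ 0 := norm_pos_iff.1 hppos
      refine ⟨Fin.snoc u (‖p‖⁻¹ • p), Fin.snoc r ‖p‖, ?_, ?_, ?_⟩
      · rw [orthonormal_iff_ite]
        intro i j
        refine Fin.lastCases ?_ ?_ i <;> [skip; intro i'] <;>
          refine Fin.lastCases ?_ ?_ j <;> try intro j'
        · rw [Fin.snoc_last, if_pos rfl, real_inner_smul_left, real_inner_smul_right,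
            real_inner_self_eq_norm_sq]
          rw [sq]
          field_simp
        · rw [if_neg (Fin.castSucc_lt_last j').ne', Fin.snoc_last, Fin.snoc_castSucc,
            real_inner_smul_left, real_inner_comm, hpLW.2 j', mul_zero]
        · rw [if_neg (Fin.castSucc_lt_last i').ne, Fin.snoc_last, Fin.snoc_castSucc,
            real_inner_smul_right, hpLW.2 i', mul_zero]
        · rw [Fin.snoc_castSucc, Fin.snoc_castSucc]
          rw [orthonormal_iff_ite] at hON
          rw [hON i' j']
          simp [Fin.castSucc_inj]
      · intro i
        refine Fin.lastCases ?_ ?_ i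
        · simp only [Fin.snoc_last]
          exact ⟨hppos, by rw [smul_inv_smul₀ (ne_of_gt hppos)]; exact hpLW.1⟩
        · intro i'
          simp only [Fin.snoc_castSucc]
          exact hmem i'
      · intro x hx i
        refine Fin.lastCases ?_ ?_ i
        · intro hyp
          have hxW : x ∈ W := by
            intro l
            have := hyp (Fin.castSucc l) (Fin.castSucc_lt_last l)
            rwa [Fin.snoc_castSucc] at this
          rw [Fin.snoc_last]
          exact hpmax x ⟨hx, hxW⟩
        · intro i' hyp
          rw [Fin.snoc_castSucc]
          refine hmax x hx i' fun l hl => ?_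
          have := hyp (Fin.castSucc l) (by exact_mod_cast Fin.castSucc_lt_castSucc_iff.2 hl)
          rwa [Fin.snoc_castSucc] at this

-- === det machinery ===


/-- negation of coordinate i₀, as a linear equiv -/
noncomputable def negCoordL (i₀ : Fin n) : EuclideanSpace ℝ (Fin n) ≃ₗ[ℝ] EuclideanSpace ℝ (Fin n) :=
  LinearEquiv.ofInvolutive
    { toFun := fun x => (WithLp.toLp 2 (fun l => if l = i₀ then -(x l) else x l) : EuclideanSpace ℝ (Fin n))
      map_add' := by
        intro x y; ext l
        simp only [PiLp.add_apply, PiLp.toLp_apply]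
        split <;> ring
      map_smul' := by
        intro c x; ext l
        simp only [PiLp.toLp_apply, PiLp.smul_apply, smul_eq_mul, RingHom.id_apply]
        split <;> ring }
    (by
      intro x; ext l
      simp only [LinearMap.coe_mk, AddHom.coe_mk, PiLp.toLp_apply]
      split <;> ring)

lemma negCoordL_apply (i₀ : Fin n) (x : EuclideanSpace ℝ (Fin n)) (l : Fin n) :
    negCoordL i₀ x l = if l = i₀ then -(x l) else x l := rfl

noncomputable def negCoord (i₀ : Fin n) :
    EuclideanSpace ℝ (Fin n) ≃ₗᵢ[ℝ] EuclideanSpace ℝ (Fin n) :=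
  (negCoordL i₀).isometryOfInner (by
    intro x y
    rw [inner_sum', inner_sum']
    refine Finset.sum_congr rfl fun i _ => ?_
    rw [negCoordL_apply, negCoordL_apply]
    split <;> ring)

lemma negCoord_apply (i₀ : Fin n) (x : EuclideanSpace ℝ (Fin n)) (l : Fin n) :
    negCoord i₀ x l = if l = i₀ then -(x l) else x l := rfl

lemma negCoord_det (i₀ : Fin n) :
    LinearMap.det ((negCoord i₀).toLinearEquiv : EuclideanSpace ℝ (Fin n) →ₗ[ℝ]
      EuclideanSpace ℝ (Fin n)) = -1 := by
  classical
  set e := (EuclideanSpace.basisFun (Fin n) ℝ).toBasis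
  rw [← LinearMap.det_toMatrix e]
  have : LinearMap.toMatrix e e ((negCoord i₀).toLinearEquiv : EuclideanSpace ℝ (Fin n) →ₗ[ℝ]
      EuclideanSpace ℝ (Fin n)) = Matrix.diagonal (fun i => if i = i₀ then (-1 : ℝ) else 1) := by
    ext i j
    rw [LinearMap.toMatrix_apply]
    have he : e.repr (((negCoord i₀).toLinearEquiv : EuclideanSpace ℝ (Fin n) →ₗ[ℝ]
        EuclideanSpace ℝ (Fin n)) (e j)) i = (negCoord i₀ (e j)) i := rfl
    rw [he, negCoord_apply]
    have hej : ∀ l, e j l = if l = j then (1:ℝ) else 0 := by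
      intro l
      have : e j = EuclideanSpace.single j 1 := by
        simp [e, EuclideanSpace.basisFun_apply]
      rw [this, EuclideanSpace.single_apply]
    by_cases h1 : i = i₀ <;> by_cases h2 : i = j <;>
      simp [Matrix.diagonal, h1, h2, eq_comm] <;> aesop
  rw [this, Matrix.det_diagonal]
  rw [Finset.prod_ite_eq' Finset.univ i₀ (fun _ => (-1:ℝ))]
  simp

lemma repr_det_pm (b : OrthonormalBasis (Fin n) ℝ (EuclideanSpace ℝ (Fin n))) :
    LinearMap.det (b.repr.toLinearEquiv : EuclideanSpace ℝ (Fin n) →ₗ[ℝ]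
      EuclideanSpace ℝ (Fin n)) = 1 ∨
    LinearMap.det (b.repr.toLinearEquiv : EuclideanSpace ℝ (Fin n) →ₗ[ℝ]
      EuclideanSpace ℝ (Fin n)) = -1 := by
  classical
  rw [← LinearMap.det_toMatrix b.toBasis]
  have : LinearMap.toMatrix b.toBasis b.toBasis (b.repr.toLinearEquiv :
      EuclideanSpace ℝ (Fin n) →ₗ[ℝ] EuclideanSpace ℝ (Fin n)) =
      b.toBasis.toMatrix ⇑(EuclideanSpace.basisFun (Fin n) ℝ) := by
    ext i j
    rw [LinearMap.toMatrix_apply, Module.Basis.toMatrix_apply]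
    have harg : (b.repr.toLinearEquiv : EuclideanSpace ℝ (Fin n) →ₗ[ℝ]
        EuclideanSpace ℝ (Fin n)) (b.toBasis j) = (EuclideanSpace.basisFun (Fin n) ℝ) j := by
      show b.repr (b.toBasis j) = _
      rw [OrthonormalBasis.coe_toBasis, OrthonormalBasis.repr_self,
        EuclideanSpace.basisFun_apply]
    rw [harg]
  rw [this, ← Module.Basis.det_apply]
  exact b.det_to_matrix_orthonormalBasis_real (EuclideanSpace.basisFun (Fin n) ℝ)

-- === transport lemmas ===

lemma goodPos_repr {K : Set (EuclideanSpace ℝ (Fin n))} (u : Fin n → EuclideanSpace ℝ (Fin n))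
    (r : Fin n → ℝ)
    (hmem : ∀ i, 0 < r i ∧ r i • u i ∈ polarSet K)
    (hchain : ∀ x ∈ polarSet K, ∀ i : Fin n, (∀ l, l < i → ⟪u l, x⟫ = 0) → ‖x‖ ≤ r i)
    (V : EuclideanSpace ℝ (Fin n) ≃ₗᵢ[ℝ] EuclideanSpace ℝ (Fin n))
    (hV : ∀ i, V (u i) = EuclideanSpace.single i 1) :
    GoodPos (⇑V '' K) := by
  refine ⟨r, fun i => ⟨(hmem i).1, ?_⟩, ?_⟩
  · rintro y' ⟨y, hy, rfl⟩
    calc ⟪r i • EuclideanSpace.single i 1, V y⟫ = ⟪V (r i • u i), V y⟫ := by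
          rw [map_smul, hV]
      _ = ⟪r i • u i, y⟫ := V.inner_map_map _ _
      _ ≤ 1 := (hmem i).2 y hy
  · intro z hz i hl
    have hz0 : V.symm z ∈ polarSet K := by
      intro y hy
      have h1 : ⟪V.symm z, y⟫ = ⟪V (V.symm z), V y⟫ := (V.inner_map_map _ _).symm
      rw [h1, V.apply_symm_apply]
      exact hz (V y) ⟨y, hy, rfl⟩
    have hcond : ∀ l, l < i → ⟪u l, V.symm z⟫ = 0 := by
      intro l hli
      have h1 : ⟪u l, V.symm z⟫ = ⟪V (u l), V (V.symm z)⟫ := (V.inner_map_map _ _).symm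
      rw [h1, V.apply_symm_apply, hV, EuclideanSpace.inner_single_left]
      simpa using hl l hli
    have := hchain _ hz0 i hcond
    rwa [LinearIsometryEquiv.norm_map] at this

lemma negCoord_self_adjoint (i₀ : Fin n) (a b : EuclideanSpace ℝ (Fin n)) :
    ⟪negCoord i₀ a, b⟫ = ⟪a, negCoord i₀ b⟫ := by
  rw [inner_sum', inner_sum']
  refine Finset.sum_congr rfl fun i _ => ?_
  rw [negCoord_apply, negCoord_apply]
  split <;> ring

lemma goodPos_negCoord {M : Set (EuclideanSpace ℝ (Fin n))} (hM : GoodPos M)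
    (hMsym : ∀ y ∈ M, -y ∈ M) (i₀ : Fin n) :
    GoodPos (⇑(negCoord i₀) '' M) := by
  obtain ⟨r, hr, hchain⟩ := hM
  refine ⟨r, fun i => ⟨(hr i).1, ?_⟩, ?_⟩
  · rintro y' ⟨y, hy, rfl⟩
    rw [← negCoord_self_adjoint]
    by_cases hii : i = i₀
    · have hneg : negCoord i₀ ((r i • EuclideanSpace.single i 1 :
          EuclideanSpace ℝ (Fin n))) = -(r i • EuclideanSpace.single i 1) := by
        ext l
        rw [negCoord_apply]
        show _ = -((r i • EuclideanSpace.single i 1 : EuclideanSpace ℝ (Fin n)) l)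
        by_cases hl : l = i₀
        · rw [if_pos hl]
        · rw [if_neg hl]
          show (r i) * (EuclideanSpace.single i (1:ℝ)) l = -((r i) * (EuclideanSpace.single i (1:ℝ)) l)
          rw [EuclideanSpace.single_apply, if_neg (by rw [hii]; exact hl)]
          ring
      rw [hneg, inner_neg_left, ← inner_neg_right]
      exact (hr i).2 (-y) (hMsym y hy)
    · have hfix : negCoord i₀ ((r i • EuclideanSpace.single i 1 :
          EuclideanSpace ℝ (Fin n))) = r i • EuclideanSpace.single i 1 := by
        ext l
        rw [negCoord_apply]
        by_cases hl : l = i₀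
        · rw [if_pos hl]
          show -((r i) * (EuclideanSpace.single i (1:ℝ)) l) = (r i) * (EuclideanSpace.single i (1:ℝ)) l
          rw [EuclideanSpace.single_apply, if_neg (by rw [hl]; exact fun h => hii h.symm)]
          ring
        · rw [if_neg hl]
      rw [hfix]
      exact (hr i).2 y hy
  · intro z hz i hl
    have hz0 : negCoord i₀ z ∈ polarSet M := by
      intro y hy
      rw [negCoord_self_adjoint]
      exact hz _ ⟨y, hy, rfl⟩
    have hcond : ∀ l, l < i → negCoord i₀ z l = 0 := by
      intro l hli
      rw [negCoord_apply]
      rw [hl l hli]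
      split <;> ring
    have := hchain _ hz0 i hcond
    rwa [LinearIsometryEquiv.norm_map] at this

-- === polar set facts ===

lemma polarSet_closed (M : Set (EuclideanSpace ℝ (Fin n))) : IsClosed (polarSet M) := by
  have h : polarSet M = ⋂ y ∈ M, {u : EuclideanSpace ℝ (Fin n) | ⟪u, y⟫ ≤ 1} := by
    ext u; simp [polarSet]
  rw [h]
  exact isClosed_biInter fun y _ =>
    isClosed_le (Continuous.inner continuous_id continuous_const) continuous_const

lemma polarSet_compact {M : Set (EuclideanSpace ℝ (Fin n))} {ε : ℝ} (hε : 0 < ε)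
    (hball : Metric.ball 0 ε ⊆ M) : IsCompact (polarSet M) := by
  apply (isCompact_closedBall (0 : EuclideanSpace ℝ (Fin n)) (2/ε)).of_isClosed_subset
    (polarSet_closed M)
  intro u hu
  rw [Metric.mem_closedBall, dist_zero_right]
  rcases eq_or_ne u 0 with h | h
  · rw [h, norm_zero]; positivity
  · have hupos : 0 < ‖u‖ := norm_pos_iff.2 h
    have hy : ((ε/2) * ‖u‖⁻¹) • u ∈ M := by
      apply hball
      rw [Metric.mem_ball, dist_zero_right, norm_smul, Real.norm_eq_abs,
        abs_of_pos (by positivity)]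
      rw [mul_assoc, inv_mul_cancel₀ hupos.ne', mul_one]
      linarith
    have := hu _ hy
    rw [real_inner_smul_right, real_inner_self_eq_norm_sq] at this
    have h2 : (ε/2) * ‖u‖ ≤ 1 := by
      have hexp : ε / 2 * ‖u‖⁻¹ * ‖u‖ ^ 2 = (ε/2) * ‖u‖ := by
        field_simp
      rwa [hexp] at this
    rw [div_eq_mul_inv]
    have h2' : ε * ‖u‖ ≤ 2 := by linarith
    calc ‖u‖ = ε⁻¹ * (ε * ‖u‖) := by field_simp
      _ ≤ ε⁻¹ * 2 := mul_le_mul_of_nonneg_left h2' (by positivity)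
      _ = 2 * ε⁻¹ := by ring

lemma closedBall_subset_polarSet {M : Set (EuclideanSpace ℝ (Fin n))} {R : ℝ} (hR : 0 < R)
    (hMb : ∀ y ∈ M, ‖y‖ ≤ R) : Metric.closedBall 0 R⁻¹ ⊆ polarSet M := by
  intro u hu y hy
  rw [Metric.mem_closedBall, dist_zero_right] at hu
  calc ⟪u, y⟫ ≤ ‖u‖ * ‖y‖ := real_inner_le_norm u y
    _ ≤ R⁻¹ * R := by
        apply mul_le_mul hu (hMb y hy) (norm_nonneg _) (by positivity)
    _ = 1 := inv_mul_cancel₀ hR.ne'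

lemma mem_kConvexHull_of_mem {M : Set (EuclideanSpace ℝ (Fin n))} {m : ℕ}
    {x : EuclideanSpace ℝ (Fin n)} (hx : x ∈ M) : x ∈ kConvexHull n m M :=
  Set.mem_iInter₂.2 fun S _ => ⟨x, hx, rfl⟩

lemma kConvexHull_coord_bound {M : Set (EuclideanSpace ℝ (Fin n))} {m : ℕ} {R : ℝ}
    (hm1 : 1 ≤ m) (hmn : m ≤ n) (hMb : ∀ y ∈ M, ‖y‖ ≤ R) :
    ∀ z ∈ kConvexHull n m M, ∀ i, |z i| ≤ R := by
  intro z hz i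
  obtain ⟨S, hSsub, hSsub2, hScard⟩ :=
    Finset.exists_subsuperset_card_eq (Finset.subset_univ {i}) (by simpa using hm1)
      (by simp; omega)
  obtain ⟨y, hy, heq⟩ := mem_kConvexHull_iff.1 hz S hScard
  have hiS : i ∈ S := hSsub (Finset.mem_singleton_self i)
  have h1 : z i = coordProj S z i := by rw [coordProj_apply, if_pos hiS]
  have h2 : coordProj S y i = y i := by rw [coordProj_apply, if_pos hiS]
  rw [h1, ← heq, h2]
  exact le_trans (abs_coord_le_norm y i) (hMb y hy)

-- === ndiam comparison ===

lemma ndiam_le_three (N : EuclideanSpace ℝ (Fin n) → ℝ)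
    (hNadd : ∀ x y, N (x + y) ≤ N x + N y)
    (hNsmul : ∀ (c : ℝ) (x), N (c • x) = |c| * N x)
    (A B : Set (EuclideanSpace ℝ (Fin n))) (hBne : B.Nonempty)
    (CB : ℝ) (hCB : ∀ z ∈ B, ∀ i, |z i| ≤ CB)
    (hincl : ∀ x ∈ A, (3:ℝ)⁻¹ • x ∈ B) :
    ndiam N A ≤ 3 * ndiam N B := by
  have hN0 : N 0 = 0 := by
    have := hNsmul 0 0
    simpa using this
  have hNnonneg : ∀ x, 0 ≤ N x := by
    intro x
    have h1 := hNadd x (-x)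
    have h2 : N (-x) = N x := by
      have := hNsmul (-1) x
      simpa using this
    have h3 : N (x + -x) = 0 := by rw [add_neg_cancel]; exact hN0
    linarith
  have hNsum : ∀ (s : Finset (Fin n)) (g : Fin n → EuclideanSpace ℝ (Fin n)),
      N (∑ i ∈ s, g i) ≤ ∑ i ∈ s, N (g i) := by
    intro s g
    classical
    induction s using Finset.cons_induction with
    | empty => simp [hN0]
    | cons a s ha ih =>
        rw [Finset.sum_cons, Finset.sum_cons]
        calc N (g a + ∑ i ∈ s, g i) ≤ N (g a) + N (∑ i ∈ s, g i) := hNadd _ _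
          _ ≤ N (g a) + ∑ i ∈ s, N (g i) := by linarith
  have hNbound : ∀ z : EuclideanSpace ℝ (Fin n),
      N z ≤ ∑ i, |z i| * N (EuclideanSpace.single i 1) := by
    intro z
    calc N z = N (∑ i, z i • (EuclideanSpace.single i 1 : EuclideanSpace ℝ (Fin n))) := by
          rw [← euclidean_decomp]
      _ ≤ ∑ i, N (z i • (EuclideanSpace.single i 1 : EuclideanSpace ℝ (Fin n))) :=
          hNsum _ _
      _ = ∑ i, |z i| * N (EuclideanSpace.single i 1) := by
          refine Finset.sum_congr rfl fun i _ => hNsmul _ _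
  obtain ⟨DB, hDB⟩ : ∃ DB, DB = {d : ℝ | ∃ x ∈ B, ∃ y ∈ B, d = N (x - y)} := ⟨_, rfl⟩
  have hndB : ndiam N B = sSup DB := by rw [hDB]; rfl
  obtain ⟨b, hb⟩ := hBne
  have h0DB : (0:ℝ) ∈ DB := by
    rw [hDB]
    exact ⟨b, hb, b, hb, by rw [sub_self, hN0]⟩
  have hDBbdd : BddAbove DB := by
    refine ⟨∑ i, 2 * CB * N (EuclideanSpace.single i 1), ?_⟩
    rw [hDB]
    rintro d ⟨x, hx, y, hy, rfl⟩
    calc N (x - y) ≤ ∑ i, |(x - y) i| * N (EuclideanSpace.single i 1) := hNbound _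
      _ ≤ ∑ i, 2 * CB * N (EuclideanSpace.single i 1) := by
          refine Finset.sum_le_sum fun i _ => ?_
          apply mul_le_mul_of_nonneg_right _ (hNnonneg _)
          have h1 : (x - y) i = x i - y i := rfl
          rw [h1]
          have := hCB x hx i
          have := hCB y hy i
          have := abs_sub (x i) (y i)
          calc |x i - y i| ≤ |x i| + |y i| := abs_sub _ _
            _ ≤ 2 * CB := by linarith
  have hsupB : 0 ≤ sSup DB := le_csSup hDBbdd h0DB
  rw [hndB]
  show sSup {d : ℝ | ∃ x ∈ A, ∃ y ∈ A, d = N (x - y)} ≤ 3 * sSup DB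
  apply Real.sSup_le
  · rintro d ⟨x, hx, y, hy, rfl⟩
    have hb1 := hincl x hx
    have hb2 := hincl y hy
    have hd : N (x - y) = 3 * N ((3:ℝ)⁻¹ • x - (3:ℝ)⁻¹ • y) := by
      have h3 : (3:ℝ) • ((3:ℝ)⁻¹ • x - (3:ℝ)⁻¹ • y) = x - y := by
        rw [smul_sub, smul_smul, smul_smul]
        norm_num
      rw [← h3, hNsmul]
      norm_num
    rw [hd]
    have hmem : N ((3:ℝ)⁻¹ • x - (3:ℝ)⁻¹ • y) ∈ DB := by
      rw [hDB]; exact ⟨_, hb1, _, hb2, rfl⟩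
    have := le_csSup hDBbdd hmem
    linarith
  · linarith

-- === final assembly ===

lemma final_common {K : Set (EuclideanSpace ℝ (Fin n))}
    (hKcomp : IsCompact K) (hKconv : Convex ℝ K) (hKsym : K = -K) (hK0 : (0:EuclideanSpace ℝ (Fin n)) ∈ K)
    {R : ℝ} (hR : 0 < R) (hKb : ∀ y ∈ K, ‖y‖ ≤ R)
    (U : EuclideanSpace ℝ (Fin n) ≃ₗᵢ[ℝ] EuclideanSpace ℝ (Fin n))
    (hGood : GoodPos (⇑U '' K)) :
    ∀ N : EuclideanSpace ℝ (Fin n) → ℝ,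
      (∀ x, N x = 0 ↔ x = 0) →
      (∀ x y, N (x + y) ≤ N x + N y) →
      (∀ (c : ℝ) (x), N (c • x) = |c| * N x) →
      ∀ k : ℕ, 2 ≤ k → k ≤ n →
        ndiam N (kConvexHull n (k - 1) (⇑U '' K)) ≤
          3 * ndiam N (kConvexHull n k (⇑U '' K)) := by
  intro N _hN0 hNadd hNsmul k hk2 hkn
  have hMc : IsCompact (⇑U '' K) := hKcomp.image U.continuous
  have hMconv : Convex ℝ (⇑U '' K) := by
    have h : ⇑U '' K = (U.toLinearEquiv : EuclideanSpace ℝ (Fin n) →ₗ[ℝ]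
        EuclideanSpace ℝ (Fin n)) '' K := rfl
    rw [h]
    exact hKconv.linear_image _
  have hMsym : ∀ y ∈ ⇑U '' K, -y ∈ ⇑U '' K := by
    rintro y ⟨a, ha, rfl⟩
    refine ⟨-a, ?_, map_neg U a⟩
    have h1 : -a ∈ -K := Set.neg_mem_neg.2 ha
    rwa [← hKsym] at h1
  have hM0 : (0:EuclideanSpace ℝ (Fin n)) ∈ ⇑U '' K := ⟨0, hK0, map_zero U⟩
  have hMb : ∀ y ∈ ⇑U '' K, ‖y‖ ≤ R := by
    rintro y ⟨a, ha, rfl⟩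
    rw [U.norm_map]
    exact hKb a ha
  apply ndiam_le_three N hNadd hNsmul _ _ ⟨0, mem_kConvexHull_of_mem hM0⟩ R
  · exact kConvexHull_coord_bound (by omega) hkn hMb
  · intro x hx
    exact inclusion_third hGood hMc hMconv hMsym hM0 hk2 hkn hx


/-- For every positive `n` and every symmetric convex body `K ⊆ ℝⁿ` there is `U ∈ SO(n)`
such that, for every norm `N` on `ℝⁿ` and every `k ∈ {2, …, n}`, the `N`-diameter of
`Q_{k-1}(UK)` is at most `3` times the `N`-diameter of `Q_k(UK)`. -/
theorem stmt_1 (n : ℕ) (hn : 0 < n) (K : Set (EuclideanSpace ℝ (Fin n)))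
    (hKcomp : IsCompact K) (hKconv : Convex ℝ K) (hKint : (interior K).Nonempty)
    (hKsym : K = -K) :
    ∃ U : EuclideanSpace ℝ (Fin n) ≃ₗᵢ[ℝ] EuclideanSpace ℝ (Fin n),
      LinearMap.det (U.toLinearEquiv : EuclideanSpace ℝ (Fin n) →ₗ[ℝ]
        EuclideanSpace ℝ (Fin n)) = 1 ∧
      ∀ N : EuclideanSpace ℝ (Fin n) → ℝ,
        (∀ x, N x = 0 ↔ x = 0) →
        (∀ x y, N (x + y) ≤ N x + N y) →
        (∀ (c : ℝ) (x), N (c • x) = |c| * N x) →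
        ∀ k : ℕ, 2 ≤ k → k ≤ n →
          ndiam N (kConvexHull n (k - 1) (⇑U '' K)) ≤
            3 * ndiam N (kConvexHull n k (⇑U '' K)) := by
  classical
  -- 0 is an interior point
  obtain ⟨x₀, hx₀⟩ := hKint
  have hx₀' : -x₀ ∈ interior K := by
    have h1 : -x₀ ∈ -interior K := Set.neg_mem_neg.2 hx₀
    have hopen : IsOpen (-interior K) := isOpen_interior.neg
    have hsub : -interior K ⊆ K := by
      intro z hz
      rw [Set.mem_neg] at hz
      rw [hKsym, Set.mem_neg]
      exact interior_subset hz
    exact interior_maximal hsub hopen h1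
  have h0int : (0:EuclideanSpace ℝ (Fin n)) ∈ interior K := by
    have hcvx : Convex ℝ (interior K) := hKconv.interior
    have := hcvx hx₀ hx₀' (by norm_num : (0:ℝ) ≤ 1/2) (by norm_num : (0:ℝ) ≤ 1/2)
      (by norm_num)
    simpa [smul_neg] using this
  obtain ⟨ε, hε, hball⟩ := Metric.isOpen_iff.1 isOpen_interior 0 h0int
  have hballK : Metric.ball 0 ε ⊆ K := hball.trans interior_subset
  have hK0 : (0:EuclideanSpace ℝ (Fin n)) ∈ K := interior_subset h0int
  -- bound for K
  obtain ⟨R₀, hR₀⟩ := hKcomp.isBounded.subset_closedBall 0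
  obtain ⟨R, hRpos, hKb⟩ : ∃ R : ℝ, 0 < R ∧ ∀ y ∈ K, ‖y‖ ≤ R := by
    refine ⟨max R₀ 1, by positivity, fun y hy => ?_⟩
    have := hR₀ hy
    rw [Metric.mem_closedBall, dist_zero_right] at this
    exact this.trans (le_max_left _ _)
  -- the polar body
  have hLcomp : IsCompact (polarSet K) := polarSet_compact hε hballK
  have hLball : Metric.closedBall 0 R⁻¹ ⊆ polarSet K := closedBall_subset_polarSet hRpos hKb
  obtain ⟨u, r, hON, hmem, hmax⟩ := exists_chain (polarSet K) hLcomp (by positivity) hLball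
  -- an orthonormal basis through u
  have hcard : Module.finrank ℝ (EuclideanSpace ℝ (Fin n)) = Fintype.card (Fin n) := by
    simp [finrank_euclideanSpace_fin]
  have hrestrict : Orthonormal ℝ ((Set.univ : Set (Fin n)).restrict u) :=
    hON.comp _ Subtype.val_injective
  obtain ⟨b, hb⟩ := Orthonormal.exists_orthonormalBasis_extension_of_card_eq hcard hrestrict
  have hU₁ : ∀ i, b.repr (u i) = EuclideanSpace.single i 1 := by
    intro i
    rw [← hb i (Set.mem_univ i)]
    exact b.repr_self i
  have hGood₁ : GoodPos (⇑b.repr '' K) := goodPos_repr u r hmem hmax b.repr hU₁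
  rcases repr_det_pm b with hdet | hdet
  · exact ⟨b.repr, hdet, final_common hKcomp hKconv hKsym hK0 hRpos hKb b.repr hGood₁⟩
  · -- compose with the negation of the first coordinate
    set i₀ : Fin n := ⟨0, hn⟩
    refine ⟨b.repr.trans (negCoord i₀), ?_, ?_⟩
    · have hcomp : ((b.repr.trans (negCoord i₀)).toLinearEquiv : EuclideanSpace ℝ (Fin n) →ₗ[ℝ]
          EuclideanSpace ℝ (Fin n)) =
          ((negCoord i₀).toLinearEquiv : EuclideanSpace ℝ (Fin n) →ₗ[ℝ]
            EuclideanSpace ℝ (Fin n)) ∘ₗ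
          (b.repr.toLinearEquiv : EuclideanSpace ℝ (Fin n) →ₗ[ℝ] EuclideanSpace ℝ (Fin n)) := by
        rfl
      rw [hcomp, LinearMap.det_comp, negCoord_det, hdet]
      norm_num
    · have hM₁sym : ∀ y ∈ ⇑b.repr '' K, -y ∈ ⇑b.repr '' K := by
        rintro y ⟨a, ha, rfl⟩
        refine ⟨-a, ?_, map_neg b.repr a⟩
        have h1 : -a ∈ -K := Set.neg_mem_neg.2 ha
        rwa [← hKsym] at h1
      have himg : ⇑(b.repr.trans (negCoord i₀)) '' K = ⇑(negCoord i₀) '' (⇑b.repr '' K) := by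
        rw [LinearIsometryEquiv.coe_trans, Set.image_comp]
      have hGood₂ : GoodPos (⇑(b.repr.trans (negCoord i₀)) '' K) := by
        rw [himg]
        exact goodPos_negCoord hGood₁ hM₁sym i₀
      exact final_common hKcomp hKconv hKsym hK0 hRpos hKb _ hGood₂
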